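/- ∫_{-∞}^{∞} u² / cosh u du = π³/4. -/

import Mathlib

open Real MeasureTheory Set

private lemma integrable_comp_abs' {f : ℝ → ℝ} (hf : IntegrableOn f (Ioi 0)) :
    Integrable fun x => f |x| := by
  have hf' : IntegrableOn (fun x => f |x|) (Ioi 0) := by
    apply hf.congr_fun (fun x hx => ?_) measurableSet_Ioi
    rw [abs_eq_self.mpr (le_of_lt hx)]
  have int_Iic : IntegrableOn (fun x ↦ f |x|) (Iic 0) := by
    rw [← Measure.map_neg_eq_self (volume : Measure ℝ)]
    let m : MeasurableEmbedding fun x : ℝ => -x := (Homeomorph.neg ℝ).measurableEmbedding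
    rw [m.integrableOn_map_iff]
    simp_rw [Function.comp_def, abs_neg, neg_preimage, neg_Iic, neg_zero]
    exact Iff.mpr integrableOn_Ici_iff_integrableOn_Ioi hf'
  have := int_Iic.union hf'
  rwa [Iic_union_Ioi, integrableOn_univ] at this

private lemma integrableOn_sq_exp {a : ℝ} (ha : 0 < a) :
    IntegrableOn (fun t : ℝ => t ^ 2 * Real.exp (-(a * t))) (Ioi 0) := by
  have := integrableOn_rpow_mul_exp_neg_mul_rpow (p := 1) (s := 2) (b := a)
    (by norm_num) (by norm_num) ha
  apply this.congr_fun (fun t ht => ?_) measurableSet_Ioi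
  rw [Real.rpow_one, show (2:ℝ) = ((2:ℕ):ℝ) by norm_num,
    Real.rpow_natCast, neg_mul]

private lemma integrable_aux {a : ℝ} (ha : 0 < a) :
    Integrable fun u : ℝ => u ^ 2 * Real.exp (-(a * |u|)) := by
  have h : (fun u : ℝ => u ^ 2 * Real.exp (-(a * |u|)))
      = fun u => (fun t => t ^ 2 * Real.exp (-(a * t))) |u| := by
    funext u; simp [sq_abs]
  rw [h]
  exact integrable_comp_abs' (integrableOn_sq_exp ha)

private lemma integral_aux {a : ℝ} (ha : 0 < a) :
    ∫ u : ℝ, u ^ 2 * Real.exp (-(a * |u|)) = 4 / a ^ 3 := by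
  have h : ∫ u : ℝ, u ^ 2 * Real.exp (-(a * |u|))
      = ∫ u : ℝ, (fun t => t ^ 2 * Real.exp (-(a * t))) |u| := by
    congr 1; funext u; simp [sq_abs]
  rw [h, integral_comp_abs (f := fun t : ℝ => t ^ 2 * Real.exp (-(a * t)))]
  have key := integral_rpow_mul_exp_neg_mul_Ioi (a := 3) (r := a) (by norm_num) ha
  have h2 : ∫ t : ℝ in Ioi 0, t ^ 2 * Real.exp (-(a * t))
      = ∫ t : ℝ in Ioi 0, t ^ ((3:ℝ) - 1) * Real.exp (-(a * t)) := by
    refine setIntegral_congr_fun measurableSet_Ioi (fun t ht => ?_)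
    rw [show (3:ℝ) - 1 = ((2:ℕ):ℝ) by norm_num, Real.rpow_natCast]
  have h3 : Real.Gamma 3 = 2 := by
    rw [show (3:ℝ) = ((2:ℕ):ℝ) + 1 by norm_num, Real.Gamma_nat_eq_factorial]
    norm_num
  rw [h2, key, h3, show (3:ℝ) = ((3:ℕ):ℝ) by norm_num, Real.rpow_natCast]
  field_simp
  ring

theorem stmt_13 : ∫ u : ℝ, u ^ 2 / Real.cosh u = Real.pi ^ 3 / 4 := by
  set F : ℕ → ℝ → ℝ := fun n u =>
    (-1 : ℝ) ^ n * (2 * (u ^ 2 * Real.exp (-((2 * (n:ℝ) + 1) * |u|)))) with hF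
  have hapos : ∀ n : ℕ, (0:ℝ) < 2 * (n:ℝ) + 1 := fun n => by positivity
  -- pointwise sum
  have hpt : ∀ u : ℝ, ∑' n, F n u = u ^ 2 / Real.cosh u := by
    intro u
    rcases eq_or_ne u 0 with rfl | hu
    · simp [hF]
    · have ht : 0 < |u| := abs_pos.mpr hu
      set t := |u|
      have hgeo : ∑' n : ℕ, (-Real.exp (-(2 * t))) ^ n
          = (1 + Real.exp (-(2 * t)))⁻¹ := by
        rw [tsum_geometric_of_norm_lt_one (by
          rw [norm_neg, Real.norm_eq_abs, abs_of_pos (Real.exp_pos _)]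
          exact Real.exp_lt_one_iff.mpr (by linarith))]
        congr 1; ring
      have hterm : ∀ n : ℕ, F n u
          = (2 * u ^ 2 * Real.exp (-t)) * (-Real.exp (-(2 * t))) ^ n := by
        intro n
        have hexp : Real.exp (-((2 * (n:ℝ) + 1) * t))
            = Real.exp (-t) * (Real.exp (-(2 * t))) ^ n := by
          rw [← Real.exp_nat_mul, ← Real.exp_add]
          congr 1; ring
        rw [hF]
        simp only
        rw [hexp, show (-Real.exp (-(2 * t))) = (-1) * Real.exp (-(2 * t)) by ring,
          mul_pow]
        ring
      rw [tsum_congr hterm, tsum_mul_left, hgeo]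
      have hc : Real.cosh u = Real.cosh t := (Real.cosh_abs u).symm
      rw [hc, Real.cosh_eq]
      have he1 : Real.exp t ≠ 0 := (Real.exp_pos _).ne'
      have he2 : (Real.exp t + Real.exp (-t)) ≠ 0 := by positivity
      have h2t : Real.exp (-(2*t)) = Real.exp (-t) * Real.exp (-t) := by
        rw [← Real.exp_add]; ring_nf
      rw [h2t]
      have hee : Real.exp t * Real.exp (-t) = 1 := by
        rw [← Real.exp_add]; simp
      field_simp
      ring_nf
      nlinarith [hee, sq_nonneg u, Real.exp_pos t, Real.exp_pos (-t)]
  -- integrability of each term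
  have hint : ∀ n : ℕ, Integrable (F n) := by
    intro n
    exact ((integrable_aux (hapos n)).const_mul 2).const_mul _
  -- value of each integral
  have hval : ∀ n : ℕ, ∫ u : ℝ, F n u
      = (-1 : ℝ) ^ n * (8 / (2 * (n:ℝ) + 1) ^ 3) := by
    intro n
    rw [hF]
    simp only
    rw [integral_const_mul, integral_const_mul, integral_aux (hapos n)]
    ring
  -- norm integrals
  have hnorm : ∀ n : ℕ, (∫ u : ℝ, ‖F n u‖) = 8 / (2 * (n:ℝ) + 1) ^ 3 := by
    intro n
    have : ∀ u : ℝ, ‖F n u‖ = 2 * (u ^ 2 * Real.exp (-((2 * (n:ℝ) + 1) * |u|))) := by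
      intro u
      rw [hF]
      simp only [norm_mul, norm_pow, norm_neg, norm_one, one_pow, one_mul,
        Real.norm_eq_abs]
      rw [abs_of_nonneg (by norm_num : (0:ℝ) ≤ 2), sq_abs,
        abs_of_nonneg (Real.exp_pos _).le]
    simp_rw [this]
    rw [integral_const_mul, integral_aux (hapos n)]
    ring
  have hbase : Summable (fun n : ℕ => 8 / ((n:ℝ) + 1) ^ 3) := by
    have h0 : Summable (fun n : ℕ => 1 / ((n:ℝ)) ^ 3) :=
      (Real.summable_one_div_nat_pow (p := 3)).mpr (by norm_num)
    have h1 := (summable_nat_add_iff 1).mpr h0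
    have h2 := h1.mul_left (8 : ℝ)
    apply h2.congr
    intro n
    push_cast
    ring
  have hsum : Summable fun n : ℕ => ∫ u : ℝ, ‖F n u‖ := by
    simp_rw [hnorm]
    apply Summable.of_nonneg_of_le (fun n => by positivity) (fun n => ?_) hbase
    gcongr
    linarith [Nat.cast_nonneg (α := ℝ) n]
  -- the value of the alternating series
  have hbeta : HasSum (fun k : ℕ => (-1 : ℝ) ^ k * (8 / (2 * (k:ℝ) + 1) ^ 3))
      (Real.pi ^ 3 / 4) := by
    have h0 := hasSum_L_function_mod_four_eval_three
    have hinj : Function.Injective (fun k : ℕ => 2 * k + 1) := by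
      intro a b h; simp only [] at h; omega
    have hvanish : ∀ n : ℕ, n ∉ Set.range (fun k : ℕ => 2 * k + 1) →
        (1 : ℝ) / (n : ℝ) ^ 3 * Real.sin (π * n / 2) = 0 := by
      intro n hn
      rcases Nat.even_or_odd n with ⟨m, rfl⟩ | ⟨m, rfl⟩
      · have hs : Real.sin (π * ((m + m : ℕ) : ℝ) / 2) = 0 := by
          rw [show (π * ((m + m : ℕ) : ℝ) / 2 : ℝ) = (m : ℝ) * π by push_cast; ring]
          exact Real.sin_nat_mul_pi m
        rw [hs, mul_zero]
      · exact absurd ⟨m, rfl⟩ hn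
    have h1 := (Function.Injective.hasSum_iff hinj hvanish).mpr h0
    have h2 : ∀ k : ℕ, ((fun n : ℕ => (1 : ℝ) / (n : ℝ) ^ 3 * Real.sin (π * n / 2))
        ∘ (fun k : ℕ => 2 * k + 1)) k
        = (1 : ℝ) / (2 * (k:ℝ) + 1) ^ 3 * (-1) ^ k := by
      intro k
      simp only [Function.comp]
      have : Real.sin (π * ((2 * k + 1 : ℕ) : ℝ) / 2) = (-1 : ℝ) ^ k := by
        have : (π * ((2 * k + 1 : ℕ) : ℝ) / 2 : ℝ) = (k : ℝ) * π + π / 2 := by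
          push_cast; ring
        rw [this, Real.sin_add, Real.sin_nat_mul_pi, Real.cos_pi_div_two,
          Real.sin_pi_div_two, mul_one, zero_mul, zero_add]
        have := Real.cos_nat_mul_pi_sub (0 : ℝ) k
        simpa using this
      rw [this]
      push_cast
      ring_nf
    rw [funext h2] at h1
    have hfun : (fun k : ℕ => (-1 : ℝ) ^ k * (8 / (2 * (k:ℝ) + 1) ^ 3))
        = fun k : ℕ => 8 * ((1 : ℝ) / (2 * (k:ℝ) + 1) ^ 3 * (-1) ^ k) := by
      funext k; ring
    rw [hfun, show (π : ℝ) ^ 3 / 4 = 8 * (π ^ 3 / 32) by ring]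
    exact h1.mul_left 8
  -- put it together
  calc ∫ u : ℝ, u ^ 2 / Real.cosh u
      = ∫ u : ℝ, ∑' n, F n u := by rw [funext hpt]
    _ = ∑' n, ∫ u : ℝ, F n u :=
        (integral_tsum_of_summable_integral_norm hint hsum).symm
    _ = Real.pi ^ 3 / 4 := by
        rw [tsum_congr hval]
        exact hbeta.tsum_eq
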